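/- In the free product H = ℤ/2ℤ * ℤ with generators σ and t, the subgroup generated by {t^k σ t^{−k} : k ∈ ℤ} is normal, is a free product of countably many copies of ℤ/2ℤ (i.e., the elements t^k σ t^{−k} satisfy no relations except that each has order 2), and H is the semidirect product of this subgroup with the infinite cyclic subgroup generated by t. -/

import Mathlib

/-- The free product `ℤ/2ℤ * ℤ`. -/
abbrev HH : Type := Monoid.Coprod (Multiplicative (ZMod 2)) (Multiplicative ℤ)

/-- The involution generating the `ℤ/2ℤ` free factor. -/
def sigmaGen : HH := Monoid.Coprod.inl (Multiplicative.ofAdd (1 : ZMod 2))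

/-- The generator of the `ℤ` free factor. -/
def tGen : HH := Monoid.Coprod.inr (Multiplicative.ofAdd (1 : ℤ))

/-- The conjugate `σ^(k) = t^k σ t^{-k}`. -/
def sigmaConj (k : ℤ) : HH := tGen ^ k * sigmaGen * tGen ^ (-k)

open Pointwise

namespace NCAux

/-- States: lists of integers with no two equal consecutive entries. -/
abbrev S : Type := {l : List ℤ // l.Chain' (· ≠ ·)}

/-- The action of `σ` on states. -/
def sf : List ℤ → List ℤ
  | [] => [0]
  | a :: l => if a = 0 then l else 0 :: a :: l

lemma sf_chain {l : List ℤ} (h : l.Chain' (· ≠ ·)) : (sf l).Chain' (· ≠ ·) := by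
  cases l with
  | nil => simp [sf, List.Chain']
  | cons a l =>
    by_cases ha : a = 0
    · simpa [sf, ha, List.Chain'] using h.tail
    · exact by simpa [sf, ha, List.Chain'] using List.isChain_cons_cons.2 ⟨Ne.symm ha, h⟩

lemma sf_sf {l : List ℤ} (h : l.Chain' (· ≠ ·)) : sf (sf l) = l := by
  cases l with
  | nil => simp [sf]
  | cons a l =>
    by_cases ha : a = 0
    · subst ha
      cases l with
      | nil => simp [sf]
      | cons b l =>
        have hb : b ≠ 0 := (List.isChain_cons_cons.1 h).1.symm
        simp [sf, hb]
    · simp [sf, ha]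

def sigmaFun : S → S := fun x => ⟨sf x.1, sf_chain x.2⟩

lemma sigmaFun_invol : Function.Involutive sigmaFun := by
  intro x
  exact Subtype.ext (by simpa [sigmaFun] using sf_sf x.2)

def sigmaPerm : Equiv.Perm S := sigmaFun_invol.toPerm

lemma sigmaPerm_apply (x : S) : sigmaPerm x = ⟨sf x.1, sf_chain x.2⟩ := rfl

lemma sigmaPerm_sq : sigmaPerm * sigmaPerm = 1 := by
  ext x
  simp [Equiv.Perm.mul_apply, sigmaPerm, sigmaFun_invol x]

lemma chain_add (j : ℤ) {l : List ℤ} (h : l.Chain' (· ≠ ·)) :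
    (l.map (· + j)).Chain' (· ≠ ·) := by
  rw [List.Chain', List.isChain_map]
  exact List.IsChain.imp (p := h) (fun a b hab => by simpa using hab)

/-- The action of `t^j` on states. -/
def addPerm (j : ℤ) : Equiv.Perm S where
  toFun x := ⟨x.1.map (· + j), chain_add j x.2⟩
  invFun x := ⟨x.1.map (· + (-j)), chain_add (-j) x.2⟩
  left_inv x := by apply Subtype.ext; simp [List.map_map, Function.comp_def]
  right_inv x := by apply Subtype.ext; simp [List.map_map, Function.comp_def]

lemma addPerm_apply (j : ℤ) (x : S) :
    addPerm j x = ⟨x.1.map (· + j), chain_add j x.2⟩ := rfl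

lemma addPerm_add (a b : ℤ) : addPerm (a + b) = addPerm a * addPerm b := by
  apply Equiv.ext; intro x; apply Subtype.ext
  simp [addPerm_apply, Equiv.Perm.mul_apply, List.map_map, Function.comp_def,
    add_comm, add_assoc, add_left_comm]

def ft : Multiplicative ℤ →* Equiv.Perm S where
  toFun m := addPerm m.toAdd
  map_one' := by
    apply Equiv.ext; intro x; apply Subtype.ext
    simp [addPerm_apply]
  map_mul' a b := by
    show addPerm (a.toAdd + b.toAdd) = _
    rw [addPerm_add]

def fs : Multiplicative (ZMod 2) →* Equiv.Perm S where
  toFun m := if m.toAdd = 0 then 1 else sigmaPerm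
  map_one' := by simp
  map_mul' a b := by
    have key : ∀ z : ZMod 2, z = 0 ∨ z = 1 := by decide
    have hab : (a * b).toAdd = a.toAdd + b.toAdd := rfl
    rcases key a.toAdd with ha | ha <;> rcases key b.toAdd with hb | hb <;>
      simp [hab, ha, hb, sigmaPerm_sq, show (0 + 1 : ZMod 2) ≠ 0 by decide,
        show (1 + 0 : ZMod 2) ≠ 0 by decide, show (1 + 1 : ZMod 2) = 0 by decide,
        show (1 : ZMod 2) ≠ 0 by decide]

/-- The permutation representation of `HH`. -/
def phi : HH →* Equiv.Perm S := Monoid.Coprod.lift fs ft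

lemma phi_sigma : phi sigmaGen = sigmaPerm := by
  show Monoid.Coprod.lift fs ft (Monoid.Coprod.inl _) = _
  rw [Monoid.Coprod.lift_apply_inl]
  simp [fs, show (1 : ZMod 2) ≠ 0 by decide]

lemma tGen_zpow (j : ℤ) : tGen ^ j = Monoid.Coprod.inr (Multiplicative.ofAdd j) := by
  rw [show (Multiplicative.ofAdd j) = Multiplicative.ofAdd (1 : ℤ) ^ j by
    rw [← ofAdd_zsmul]; norm_num]
  rw [tGen, map_zpow]

lemma phi_tpow (j : ℤ) : phi (tGen ^ j) = addPerm j := by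
  rw [tGen_zpow]
  show Monoid.Coprod.lift fs ft (Monoid.Coprod.inr _) = _
  rw [Monoid.Coprod.lift_apply_inr]
  rfl

lemma phi_sigmaConj (k : ℤ) :
    phi (sigmaConj k) = addPerm k * sigmaPerm * addPerm (-k) := by
  rw [sigmaConj, map_mul, map_mul, phi_tpow, phi_tpow, phi_sigma]

lemma apply_sigmaConj (k : ℤ) (l : List ℤ) (h : l.Chain' (· ≠ ·))
    (hhead : ∀ b ∈ l.head?, b ≠ k) (hc : (k :: l).Chain' (· ≠ ·)) :
    phi (sigmaConj k) ⟨l, h⟩ = ⟨k :: l, hc⟩ := by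
  apply Subtype.ext
  rw [phi_sigmaConj]
  cases l with
  | nil => simp [Equiv.Perm.mul_apply, addPerm_apply, sigmaPerm_apply, sf]
  | cons a l =>
    have ha : a + -k ≠ 0 := by
      have := hhead a (by simp)
      omega
    simp [Equiv.Perm.mul_apply, addPerm_apply, sigmaPerm_apply, sf, ha,
      List.map_map, Function.comp_def]

lemma prod_apply (L : List ℤ) (hL : L.Chain' (· ≠ ·)) :
    phi ((L.map sigmaConj).prod) ⟨[], List.isChain_nil⟩ = ⟨L, hL⟩ := by
  induction L with
  | nil => simp
  | cons a L ih =>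
    have hL' := (List.isChain_cons.1 hL).2
    rw [List.map_cons, List.prod_cons, map_mul, Equiv.Perm.mul_apply, ih hL']
    exact apply_sigmaConj a L hL'
      (fun b hb => ((List.isChain_cons.1 hL).1 b hb).symm) hL

lemma prod_ne_one {L : List ℤ} (hL : L.Chain' (· ≠ ·)) (hne : L ≠ []) :
    (L.map sigmaConj).prod ≠ 1 := by
  intro h1
  have := prod_apply L hL
  rw [h1] at this
  simp at this
  exact hne (congrArg Subtype.val this).symm

/-- The projection onto the `ℤ` factor. -/
def pi : HH →* Multiplicative ℤ := Monoid.Coprod.lift 1 (MonoidHom.id _)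

lemma pi_sigma : pi sigmaGen = 1 := by
  show Monoid.Coprod.lift 1 (MonoidHom.id _) (Monoid.Coprod.inl _) = 1
  rw [Monoid.Coprod.lift_apply_inl]; rfl

lemma pi_tpow (j : ℤ) : pi (tGen ^ j) = Multiplicative.ofAdd j := by
  rw [tGen_zpow]
  show Monoid.Coprod.lift 1 (MonoidHom.id _) (Monoid.Coprod.inr _) = _
  rw [Monoid.Coprod.lift_apply_inr]; rfl

lemma pi_sigmaConj (k : ℤ) : pi (sigmaConj k) = 1 := by
  rw [sigmaConj, map_mul, map_mul, pi_tpow, pi_tpow, pi_sigma]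
  simp [← ofAdd_add]

abbrev N : Subgroup HH := Subgroup.closure (Set.range sigmaConj)

lemma pi_mem_N {g : HH} (hg : g ∈ N) : pi g = 1 := by
  induction hg using Subgroup.closure_induction with
  | mem x hx => obtain ⟨k, rfl⟩ := hx; exact pi_sigmaConj k
  | one => simp
  | mul x y _ _ hx hy => rw [map_mul, hx, hy, mul_one]
  | inv x _ hx => rw [map_inv, hx, inv_one]

lemma conj_sigmaConj (j k : ℤ) :
    tGen ^ j * sigmaConj k * (tGen ^ j)⁻¹ = sigmaConj (j + k) := by
  rw [sigmaConj, sigmaConj]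
  group

lemma conj_mem {g : HH} (hg : g ∈ N) (j : ℤ) : tGen ^ j * g * (tGen ^ j)⁻¹ ∈ N := by
  induction hg using Subgroup.closure_induction with
  | mem x hx =>
    obtain ⟨k, rfl⟩ := hx
    rw [conj_sigmaConj]
    exact Subgroup.subset_closure ⟨j + k, rfl⟩
  | one => simpa using Subgroup.one_mem _
  | mul x y _ _ hx hy =>
    have : tGen ^ j * (x * y) * (tGen ^ j)⁻¹ =
        (tGen ^ j * x * (tGen ^ j)⁻¹) * (tGen ^ j * y * (tGen ^ j)⁻¹) := by group
    rw [this]; exact Subgroup.mul_mem _ hx hy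
  | inv x _ hx =>
    have : tGen ^ j * x⁻¹ * (tGen ^ j)⁻¹ = (tGen ^ j * x * (tGen ^ j)⁻¹)⁻¹ := by group
    rw [this]; exact Subgroup.inv_mem _ hx

lemma sigma_mem_N : sigmaGen ∈ N := by
  have : sigmaConj 0 = sigmaGen := by simp [sigmaConj]
  exact this ▸ Subgroup.subset_closure ⟨0, this⟩

lemma top_gen : Subgroup.closure {sigmaGen, tGen} = (⊤ : Subgroup HH) := by
  rw [eq_top_iff]
  intro h htop
  clear htop
  induction h using Monoid.Coprod.induction_on with
  | inl m =>
    rcases (show ∀ z : Multiplicative (ZMod 2), z = 1 ∨ z = Multiplicative.ofAdd 1 by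
      decide) m with hm | hm
    · rw [hm, map_one]; exact Subgroup.one_mem _
    · rw [hm]
      exact Subgroup.subset_closure (by left; rfl)
  | inr n =>
    have : Monoid.Coprod.inr n = tGen ^ (n.toAdd) := by rw [tGen_zpow]; rfl
    rw [this]
    exact Subgroup.zpow_mem _ (Subgroup.subset_closure (by right; rfl)) _
  | mul x y hx hy => exact Subgroup.mul_mem _ hx hy

lemma N_normal : N.Normal := by
  rw [← Subgroup.normalizer_eq_top_iff, eq_top_iff, ← top_gen, Subgroup.closure_le]
  rintro x (rfl | rfl)
  · exact Subgroup.le_normalizer sigma_mem_N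
  · rw [SetLike.mem_coe, Subgroup.mem_normalizer_iff]
    intro h
    constructor
    · intro hh
      simpa using conj_mem hh 1
    · intro hh
      have := conj_mem hh (-1)
      have e : tGen ^ (-1 : ℤ) * (tGen * h * tGen⁻¹) * (tGen ^ (-1 : ℤ))⁻¹ = h := by group
      rwa [e] at this

lemma sup_top : N ⊔ Subgroup.zpowers tGen = ⊤ := by
  rw [eq_top_iff, ← top_gen, Subgroup.closure_le]
  rintro x (rfl | rfl)
  · exact Subgroup.mem_sup_left sigma_mem_N
  · exact Subgroup.mem_sup_right (Subgroup.mem_zpowers _)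

end NCAux

open NCAux in
theorem normal_closure_of_involution_structure :
    (Subgroup.closure (Set.range sigmaConj)).Normal ∧
    -- each `σ^(k)` is an involution
    (∀ k : ℤ, sigmaConj k ≠ 1 ∧ sigmaConj k ^ 2 = 1) ∧
    -- the `σ^(k)` satisfy no other relations: every nonempty alternating
    -- word in distinct consecutive `σ^(k)`'s is nontrivial, so the subgroup
    -- is a free product of countably many copies of `ℤ/2ℤ`
    (∀ (n : ℕ), 0 < n → ∀ k : Fin n → ℤ,
      (∀ (i : Fin n) (h : (i : ℕ) + 1 < n), k i ≠ k ⟨(i : ℕ) + 1, h⟩) →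
      ((List.finRange n).map (fun i => sigmaConj (k i))).prod ≠ 1) ∧
    -- `H` is the semidirect product of this subgroup with `⟨t⟩`
    (∀ h : HH, ∃! p : Subgroup.closure (Set.range sigmaConj) × ℤ,
      h = (p.1 : HH) * tGen ^ p.2) := by
  refine ⟨N_normal, ?_, ?_, ?_⟩
  · -- involutions
    intro k
    constructor
    · intro h1
      have : ([k].map sigmaConj).prod ≠ 1 := prod_ne_one (by simp [List.Chain']) (by simp)
      simp [h1] at this
    · have hσσ : sigmaGen * sigmaGen = 1 := by
        rw [sigmaGen, ← map_mul]
        rw [show (Multiplicative.ofAdd (1 : ZMod 2) * Multiplicative.ofAdd (1 : ZMod 2)) = 1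
          by decide]
        exact map_one _
      have h2 : sigmaConj k ^ 2 = tGen ^ k * (sigmaGen * sigmaGen) * tGen ^ (-k) := by
        rw [sigmaConj, sq]; group
      rw [h2, hσσ, mul_one]
      group
  · -- no relations
    intro n hn k hk
    set L : List ℤ := (List.finRange n).map k with hLdef
    have hlen : L.length = n := by simp [hLdef]
    have hchain : L.Chain' (· ≠ ·) := by
      rw [List.Chain', List.isChain_iff_getElem]
      intro i hi
      show L.get ⟨i, by omega⟩ ≠ L.get ⟨i + 1, hi⟩
      rw [hlen] at hi
      have h1 : i < n := by omega
      have h2 : i + 1 < n := by omega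
      have g1 : L.get ⟨i, by omega⟩ = k ⟨i, h1⟩ := by
        simp [hLdef, List.getElem_map]
      have g2 : L.get ⟨i + 1, by omega⟩ = k ⟨i + 1, h2⟩ := by
        simp [hLdef, List.getElem_map]
      rw [g1, g2]
      exact hk ⟨i, h1⟩ h2
    have : ((List.finRange n).map (fun i => sigmaConj (k i))) = L.map sigmaConj := by
      simp [hLdef, List.map_map, Function.comp_def]
    rw [this]
    exact prod_ne_one hchain (by intro h; rw [h] at hlen; simp at hlen; omega)
  · -- semidirect product decomposition
    intro h
    have hN := N_normal
    have hmem : h ∈ (N : Set HH) * (Subgroup.zpowers tGen : Set HH) := by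
      rw [← Subgroup.normal_mul, sup_top]; trivial
    obtain ⟨a, ha, b, hb, hab⟩ := hmem
    obtain ⟨m, rfl⟩ := Subgroup.mem_zpowers_iff.1 hb
    refine ⟨(⟨a, ha⟩, m), hab.symm, ?_⟩
    rintro ⟨⟨b, hbN⟩, m'⟩ hq
    have hpi : Multiplicative.ofAdd m' = Multiplicative.ofAdd m := by
      have e1 : pi h = Multiplicative.ofAdd m' := by
        rw [hq, map_mul, pi_mem_N hbN, one_mul, pi_tpow]
      have e2 : pi h = Multiplicative.ofAdd m := by
        rw [← hab, map_mul, pi_mem_N ha, one_mul, pi_tpow]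
      rw [← e1, e2]
    have hm : m' = m := by exact_mod_cast hpi
    subst hm
    have : b = a := by
      have := hq.symm.trans hab.symm
      exact mul_right_cancel this
    subst this
    rfl
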